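/- Let ρ > 0, M > 0, n ≥ 2 an integer, ν ≥ 1, and σ > 1 a real with q := √(ν(n+1)M) / (σ^{(n-2)/2} ln σ) < 1. For X = M ρ^n x^{n+1}/(1-ρx) ∂_x, each term of the series ∑_{k≥1} (k/(k+1)!) X^{k+1} has ‖·‖-norm in the Banach space L_{σρ} bounded by (M/σ^n)·(√(ν(n+1)M)/(σ^{(n-2)/2} ln σ))^{2k} / √(kπ), and therefore the series converges in L_{σρ} with ‖∑_{k≥1} (k/(k+1)!) X^{k+1}‖_{σρ} ≤ (M/(√π σ^n)) · q²/(1-q²). -/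

import Mathlib

/-- Taylor coefficient sequence of `C · x^s / (1-ρx)^α` (for `α ≥ 1`). -/
noncomputable def coefF (C ρ : ℝ) (s α : ℕ) : ℕ → ℝ := fun m =>
  if s ≤ m then C * (Nat.choose (m - s + (α - 1)) (α - 1)) * ρ ^ (m - s) else 0

/-- Coefficient sequence of `f · g'` (action of `f ∂ₓ` on `g ∂ₓ`). -/
noncomputable def applyVF (f g : ℕ → ℝ) : ℕ → ℝ := fun m =>
  ∑ i ∈ Finset.range (m + 1), f i * ((m - i + 1 : ℕ) : ℝ) * g (m - i + 1)

/-- Coefficient sequence of `X^{k+1}` for `X = M ρ^n x^{n+1}/(1-ρx) ∂ₓ`. -/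
noncomputable def iterX (M ρ : ℝ) (n : ℕ) (k : ℕ) : ℕ → ℝ :=
  (fun g => applyVF (coefF (M * ρ ^ n) ρ (n + 1) 1) g)^[k]
    (coefF (M * ρ ^ n) ρ (n + 1) 1)


open Finset


lemma hockey (N r : ℕ) : ∑ t ∈ range (N+1), Nat.choose (t + r) r = Nat.choose (N + r + 1) (r+1) := by
  induction N with
  | zero => simp
  | succ N ih =>
    rw [Finset.sum_range_succ, ih, Nat.add_right_comm N 1 r,
      Nat.choose_succ_succ' (N + r + 1) r]
    omega

lemma deriv_nat (u s β : ℕ) (h : β + 1 ≤ s) :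
    (u + s) * Nat.choose (u + β) β ≤ s * Nat.choose (u + β + 1) (β + 1) := by
  have key : (u + β + 1) * Nat.choose (u + β) β = Nat.choose (u + β + 1) (β + 1) * (β + 1) :=
    Nat.add_one_mul_choose_eq (u + β) β
  refine Nat.le_of_mul_le_mul_right ?_ (Nat.succ_pos β)
  calc (u + s) * Nat.choose (u + β) β * (β + 1)
      = (u + s) * (β + 1) * Nat.choose (u + β) β := by ring
    _ ≤ s * (u + β + 1) * Nat.choose (u + β) β := by
        apply Nat.mul_le_mul_right
        calc (u + s) * (β + 1) = u * (β+1) + s * (β+1) := by ring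
          _ ≤ s * u + s * (β + 1) := by
              have h2 : u * (β+1) ≤ u * s := Nat.mul_le_mul_left u h
              exact Nat.add_le_add_right (h2.trans_eq (mul_comm u s)) _
          _ = s * (u + β + 1) := by ring
    _ = s * ((u + β + 1) * Nat.choose (u + β) β) := by ring
    _ = s * (Nat.choose (u + β + 1) (β + 1) * (β + 1)) := by rw [key]
    _ = s * Nat.choose (u + β + 1) (β + 1) * (β + 1) := by ring

lemma prod_bound (n k : ℕ) : (∏ j ∈ range k, ((j+1)*n+1)) ≤ Nat.factorial k * (n+1)^k := by
  calc (∏ j ∈ range k, ((j+1)*n+1)) ≤ ∏ j ∈ range k, ((j+1)*(n+1)) := by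
        apply Finset.prod_le_prod'
        intro j _; nlinarith [Nat.zero_le j]
    _ = (∏ j ∈ range k, (j+1)) * ∏ j ∈ range k, (n+1) := by rw [Finset.prod_mul_distrib]
    _ = Nat.factorial k * (n+1)^k := by
        rw [Finset.prod_range_add_one_eq_factorial, Finset.prod_const, card_range]



lemma coefF_nonneg {C ρ : ℝ} (hC : 0 ≤ C) (hρ : 0 ≤ ρ) (s α m : ℕ) :
    0 ≤ coefF C ρ s α m := by
  simp only [coefF]; split
  · positivity
  · exact le_refl 0

/-- derivative majorization at coefficient level -/
lemma deriv_coef {A ρ : ℝ} (hA : 0 ≤ A) (hρ : 0 ≤ ρ) (s β : ℕ) (hs : β + 1 ≤ s) (j : ℕ) :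
    ((j + 1 : ℕ) : ℝ) * coefF A ρ s (β + 1) (j + 1) ≤ coefF ((s : ℝ) * A) ρ (s - 1) (β + 2) j := by
  simp only [coefF]
  by_cases h : s ≤ j + 1
  · rw [if_pos h, if_pos (by omega : s - 1 ≤ j)]
    have hu : j + 1 - s + (β + 1 - 1) = (j + 1 - s) + β := by omega
    have hv : j - (s - 1) + (β + 2 - 1) = (j + 1 - s) + β + 1 := by omega
    have hw : j - (s - 1) = j + 1 - s := by omega
    rw [hu, hv, hw]
    set u := j + 1 - s with hu'
    have hj1 : (j + 1 : ℕ) = u + s := by omega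
    have hnat := deriv_nat u s β hs
    calc ((j + 1 : ℕ) : ℝ) * (A * (Nat.choose (u + β) β : ℝ) * ρ ^ u)
        = (((u + s) * Nat.choose (u + β) β : ℕ) : ℝ) * (A * ρ ^ u) := by
          rw [hj1]; push_cast; ring
      _ ≤ (((s * Nat.choose (u + β + 1) (β + 1) : ℕ)) : ℝ) * (A * ρ ^ u) := by
          apply mul_le_mul_of_nonneg_right _ (by positivity)
          exact_mod_cast Nat.cast_le.mpr hnat
      _ = (s : ℝ) * A * (Nat.choose (u + β + 1) (β + 1) : ℝ) * ρ ^ u := by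
          push_cast; ring
  · rw [if_neg h, if_neg (by omega : ¬ (s - 1 ≤ j)), mul_zero]

/-- convolution of `c x^a/(1-ρx)` with `B x^b/(1-ρx)^{β+1}` -/
lemma conv_coef {c B ρ : ℝ} (hρ : 0 ≤ ρ) (a b β : ℕ) (m : ℕ) :
    ∑ i ∈ range (m + 1), coefF c ρ a 1 i * coefF B ρ b (β + 1) (m - i) =
      coefF (c * B) ρ (a + b) (β + 2) m := by
  by_cases hm : a + b ≤ m
  · have hsub : Icc a (m - b) ⊆ range (m + 1) := by
      intro i hi; rw [mem_Icc] at hi; rw [mem_range]; omega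
    have step1 : ∀ i ∈ range (m + 1),
        coefF c ρ a 1 i * coefF B ρ b (β + 1) (m - i) =
        if i ∈ Icc a (m - b) then
          c * B * (Nat.choose (m - i - b + β) β : ℝ) * ρ ^ (i - a) * ρ ^ (m - i - b) else 0 := by
      intro i hi
      rw [mem_range] at hi
      simp only [coefF]
      by_cases h1 : a ≤ i
      · by_cases h2 : b ≤ m - i
        · rw [if_pos h1, if_pos h2, if_pos (by rw [mem_Icc]; omega)]
          have e1 : i - a + (1 - 1) = i - a := by omega
          have e2 : m - i - b + (β + 1 - 1) = m - i - b + β := by omega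
          rw [e1, e2, Nat.choose_zero_right]
          push_cast; ring
        · rw [if_pos h1, if_neg h2, mul_zero,
            if_neg (show i ∉ Icc a (m - b) by simp only [mem_Icc]; omega)]
      · rw [if_neg h1, zero_mul,
          if_neg (show i ∉ Icc a (m - b) by simp only [mem_Icc]; omega)]
    rw [Finset.sum_congr rfl step1, Finset.sum_ite_mem,
      Finset.inter_eq_right.mpr hsub, ← Finset.Ico_add_one_right_eq_Icc, Finset.sum_Ico_eq_sum_range]
    have hN : m - b + 1 - a = (m - (a + b)) + 1 := by omega
    set N := m - (a + b) with hNdef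
    rw [hN]
    have step2 : ∀ t ∈ range (N + 1),
        c * B * (Nat.choose (m - (a + t) - b + β) β : ℝ) * ρ ^ (a + t - a) * ρ ^ (m - (a + t) - b)
        = c * B * ρ ^ N * (Nat.choose (N - t + β) β : ℝ) := by
      intro t ht
      rw [mem_range] at ht
      have e1 : m - (a + t) - b = N - t := by omega
      have e2 : a + t - a = t := by omega
      have e3 : ρ ^ t * ρ ^ (N - t) = ρ ^ N := by
        rw [← pow_add]; congr 1; omega
      rw [e1, e2]
      calc c * B * (Nat.choose (N - t + β) β : ℝ) * ρ ^ t * ρ ^ (N - t)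
          = c * B * (Nat.choose (N - t + β) β : ℝ) * (ρ ^ t * ρ ^ (N - t)) := by ring
        _ = c * B * ρ ^ N * (Nat.choose (N - t + β) β : ℝ) := by rw [e3]; ring
    rw [Finset.sum_congr rfl step2, ← Finset.mul_sum]
    have reflect : ∑ t ∈ range (N + 1), Nat.choose (N - t + β) β
        = Nat.choose (N + β + 1) (β + 1) := by
      rw [← hockey N β, ← Finset.sum_range_reflect (fun t => Nat.choose (t + β) β) (N + 1)]
      apply Finset.sum_congr rfl
      intro t ht
      rw [mem_range] at ht
      have e : N + 1 - 1 - t = N - t := by omega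
      simp only [e]
    have reflectR : ∑ t ∈ range (N + 1), (Nat.choose (N - t + β) β : ℝ)
        = ((Nat.choose (N + β + 1) (β + 1) : ℕ) : ℝ) := by
      rw [← Nat.cast_sum, reflect]
    rw [reflectR]
    simp only [coefF]
    rw [if_pos hm]
    have e4 : m - (a + b) + (β + 2 - 1) = N + β + 1 := by omega
    rw [e4, ← hNdef]
    have e5 : β + 2 - 1 = β + 1 := by omega
    rw [e5]
    ring
  · have : ∀ i ∈ range (m + 1), coefF c ρ a 1 i * coefF B ρ b (β + 1) (m - i) = 0 := by
      intro i hi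
      rw [mem_range] at hi
      simp only [coefF]
      by_cases h1 : a ≤ i
      · rw [if_neg (by omega : ¬ (b ≤ m - i)), mul_zero]
      · rw [if_neg h1, zero_mul]
    rw [Finset.sum_congr rfl this, Finset.sum_const_zero]
    simp only [coefF]
    rw [if_neg hm]



lemma iterX_succ (M ρ : ℝ) (n k : ℕ) :
    iterX M ρ n (k + 1) = applyVF (coefF (M * ρ ^ n) ρ (n + 1) 1) (iterX M ρ n k) := by
  unfold iterX
  rw [Function.iterate_succ_apply']

lemma iterX_bound {M ρ : ℝ} (hρ : 0 < ρ) (hM : 0 < M) {n : ℕ} (hn : 2 ≤ n) (k : ℕ) : ∀ m : ℕ,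
    0 ≤ iterX M ρ n k m ∧ iterX M ρ n k m ≤
      coefF (((∏ j ∈ Finset.range k, ((j+1)*n+1) : ℕ) : ℝ) * M^(k+1) * ρ^((k+1)*n)) ρ
        ((k+1)*n+1) (2*k+1) m := by
  have hMρ : 0 ≤ M * ρ ^ n := by positivity
  induction k with
  | zero =>
    intro m
    constructor
    · exact coefF_nonneg hMρ hρ.le _ _ _
    · apply le_of_eq
      have h1 : ((∏ j ∈ Finset.range 0, ((j+1)*n+1) : ℕ) : ℝ) * M^(0+1) * ρ^((0+1)*n)
          = M * ρ ^ n := by simp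
      have h2 : (0+1)*n+1 = n+1 := by ring
      rw [h1, h2]
      norm_num
      rfl
  | succ k ih =>
    intro m
    set f := coefF (M * ρ ^ n) ρ (n + 1) 1 with hf
    have hfnn : ∀ i, 0 ≤ f i := fun i => coefF_nonneg hMρ hρ.le _ _ _
    set s := (k+1)*n+1 with hs
    set A := ((∏ j ∈ Finset.range k, ((j+1)*n+1) : ℕ) : ℝ) * M^(k+1) * ρ^((k+1)*n) with hA
    have hAnn : 0 ≤ A := by positivity
    have hrec : iterX M ρ n (k+1) m = applyVF f (iterX M ρ n k) m := by
      rw [iterX_succ]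
    have hβs : 2*k + 1 ≤ s := by
      have : (k+1)*2 ≤ (k+1)*n := Nat.mul_le_mul_left (k+1) hn
      omega
    constructor
    · rw [hrec]
      apply Finset.sum_nonneg
      intro i _
      exact mul_nonneg (mul_nonneg (hfnn i) (Nat.cast_nonneg _)) (ih (m - i + 1)).1
    · rw [hrec]
      have step1 : applyVF f (iterX M ρ n k) m ≤
          ∑ i ∈ Finset.range (m+1), f i * (((m - i + 1 : ℕ) : ℝ) *
            coefF A ρ s (2*k+1) (m - i + 1)) := by
        apply Finset.sum_le_sum
        intro i _
        rw [mul_assoc]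
        apply mul_le_mul_of_nonneg_left _ (hfnn i)
        apply mul_le_mul_of_nonneg_left ((ih (m - i + 1)).2) (by positivity)
      have step2 : ∑ i ∈ Finset.range (m+1), f i * (((m - i + 1 : ℕ) : ℝ) *
            coefF A ρ s (2*k+1) (m - i + 1)) ≤
          ∑ i ∈ Finset.range (m+1), f i * coefF ((s : ℝ) * A) ρ (s-1) (2*k+2) (m - i) := by
        apply Finset.sum_le_sum
        intro i _
        apply mul_le_mul_of_nonneg_left _ (hfnn i)
        exact deriv_coef hAnn hρ.le s (2*k) hβs (m - i)
      have step3 : ∑ i ∈ Finset.range (m+1), f i * coefF ((s : ℝ) * A) ρ (s-1) (2*k+2) (m - i)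
          = coefF ((M * ρ ^ n) * ((s : ℝ) * A)) ρ ((n+1) + (s-1)) (2*k+3) m := by
        have := conv_coef (c := M * ρ ^ n) (B := (s : ℝ) * A) hρ.le (n+1) (s-1) (2*k+1) m
        exact this
      have keyeq : coefF ((M * ρ ^ n) * ((s : ℝ) * A)) ρ ((n+1) + (s-1)) (2*k+3) m
          = coefF (((∏ j ∈ Finset.range (k+1), ((j+1)*n+1) : ℕ) : ℝ) * M^(k+2) * ρ^((k+2)*n)) ρ
            ((k+2)*n+1) (2*(k+1)+1) m := by
        have e1 : (n+1) + (s-1) = (k+2)*n+1 := by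
          rw [hs, Nat.add_sub_cancel]
          ring
        have e2 : 2*k+3 = 2*(k+1)+1 := by ring
        have e3 : (M * ρ ^ n) * ((s : ℝ) * A)
            = ((∏ j ∈ Finset.range (k+1), ((j+1)*n+1) : ℕ) : ℝ) * M^(k+2) * ρ^((k+2)*n) := by
          rw [hA, hs, Finset.prod_range_succ]
          push_cast
          ring
        rw [e1, e2, e3]
      calc applyVF f (iterX M ρ n k) m ≤ _ := step1
        _ ≤ _ := step2
        _ = _ := step3
        _ = _ := keyeq
      -- adjust exponents: (k+1+1) vs (k+2), 2*(k+1)+1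


lemma stirling_lb (k : ℕ) (hk : 1 ≤ k) :
    Real.sqrt (k * Real.pi) * (2*(k:ℝ)/Real.exp 1)^(2*k) ≤ ((2*k).factorial : ℝ) := by
  have hpos : (0:ℝ) < Real.sqrt (2 * (2*k : ℕ)) * (((2*k : ℕ):ℝ) / Real.exp 1) ^ (2*k) := by
    have h1 : (0:ℝ) < (2*k : ℕ) := by positivity
    positivity
  have hst : Real.sqrt Real.pi ≤ Stirling.stirlingSeq (2*k) := by
    have h := Stirling.stirlingSeq'_antitone.le_of_tendsto
      (by
        have := Stirling.tendsto_stirlingSeq_sqrt_pi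
        exact this.comp (Filter.tendsto_add_atTop_nat 1)) (2*k - 1)
    have e : 2*k - 1 + 1 = 2*k := by omega
    simpa [Function.comp, e] using h
  rw [Stirling.stirlingSeq, le_div_iff₀ hpos] at hst
  calc Real.sqrt (k * Real.pi) * (2*(k:ℝ)/Real.exp 1)^(2*k)
      ≤ (Real.sqrt Real.pi * Real.sqrt (2 * (2*k : ℕ))) * (2*(k:ℝ)/Real.exp 1)^(2*k) := by
        apply mul_le_mul_of_nonneg_right _ (by positivity)
        rw [← Real.sqrt_mul (by positivity)]
        apply Real.sqrt_le_sqrt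
        push_cast
        nlinarith [Real.pi_pos, (by exact_mod_cast hk : (1:ℝ) ≤ (k:ℝ))]
    _ = Real.sqrt Real.pi * (Real.sqrt (2 * (2*k : ℕ)) * (((2*k : ℕ):ℝ) / Real.exp 1) ^ (2*k)) := by
        push_cast; ring
    _ ≤ ((2*k).factorial : ℝ) := hst


lemma choose_bound {σ : ℝ} (hσ : 1 < σ) (k j : ℕ) (hk : 1 ≤ k) :
    ((Nat.choose (j + 2*k) (2*k) : ℕ) : ℝ) ≤
      σ ^ (j + 2*k) / ((Real.log σ)^(2*k) * Real.sqrt (k * Real.pi)) := by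
  have hσ0 : (0:ℝ) < σ := by linarith
  have hL : 0 < Real.log σ := Real.log_pos hσ
  have hk' : (0:ℝ) < (k:ℝ) := by exact_mod_cast hk
  set L := Real.log σ with hLdef
  set t := ((j + 2*k : ℕ) : ℝ) with ht
  have ht0 : 0 ≤ t := Nat.cast_nonneg _
  set u := t * L / (2*(k:ℝ)) with hu'
  have h1 : ((Nat.choose (j + 2*k) (2*k) : ℕ) : ℝ) ≤ t^(2*k) / ((2*k).factorial : ℝ) := by
    have := Nat.choose_le_pow_div (α := ℝ) (2*k) (j + 2*k)
    simpa [ht] using this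
  have hu : u ≤ Real.exp u / Real.exp 1 := by
    have h := Real.add_one_le_exp (u - 1)
    have e : Real.exp (u - 1) = Real.exp u / Real.exp 1 := Real.exp_sub u 1
    rw [e] at h
    linarith
  have h2 : t ≤ Real.exp u * (2*(k:ℝ) / (Real.exp 1 * L)) := by
    have hmul : u * ((2*(k:ℝ)) / L) = t := by
      rw [hu']; field_simp
    have hstep : u * ((2*(k:ℝ)) / L) ≤ (Real.exp u / Real.exp 1) * ((2*(k:ℝ)) / L) := by
      apply mul_le_mul_of_nonneg_right hu (by positivity)
    rw [hmul] at hstep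
    calc t ≤ (Real.exp u / Real.exp 1) * ((2*(k:ℝ)) / L) := hstep
      _ = Real.exp u * (2*(k:ℝ) / (Real.exp 1 * L)) := by
          field_simp
  have hexp : (Real.exp u)^(2*k) = σ ^ (j + 2*k) := by
    rw [← Real.exp_nat_mul]
    have e1 : ((2*k : ℕ) : ℝ) * u = t * L := by
      rw [hu']
      push_cast
      field_simp
    rw [e1, ht, Real.exp_nat_mul, Real.exp_log hσ0]
  have h3 : t^(2*k) ≤ σ ^ (j + 2*k) * ((2*(k:ℝ)/Real.exp 1)^(2*k) / L^(2*k)) := by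
    calc t^(2*k) ≤ (Real.exp u * (2*(k:ℝ) / (Real.exp 1 * L)))^(2*k) :=
          pow_le_pow_left₀ ht0 h2 _
      _ = (Real.exp u)^(2*k) * (2*(k:ℝ) / (Real.exp 1 * L))^(2*k) := mul_pow _ _ _
      _ = σ ^ (j + 2*k) * ((2*(k:ℝ)/Real.exp 1)^(2*k) / L^(2*k)) := by
          rw [hexp, ← div_div, div_pow]
  have hstir := stirling_lb k hk
  have hd : (0:ℝ) < Real.sqrt (k * Real.pi) * (2*(k:ℝ)/Real.exp 1)^(2*k) := by
    have := Real.pi_pos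
    positivity
  calc ((Nat.choose (j + 2*k) (2*k) : ℕ) : ℝ) ≤ t^(2*k) / ((2*k).factorial : ℝ) := h1
    _ ≤ (σ ^ (j + 2*k) * ((2*(k:ℝ)/Real.exp 1)^(2*k) / L^(2*k))) /
        (Real.sqrt (k * Real.pi) * (2*(k:ℝ)/Real.exp 1)^(2*k)) := by
        apply div_le_div₀ (by positivity) h3 hd hstir
    _ = σ ^ (j + 2*k) / (L^(2*k) * Real.sqrt (k * Real.pi)) := by
        have hLne : L^(2*k) ≠ 0 := by positivity
        have hsne : Real.sqrt (k * Real.pi) ≠ 0 := by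
          have := Real.pi_pos; positivity
        have hpne : (2*(k:ℝ)/Real.exp 1)^(2*k) ≠ 0 := by positivity
        field_simp


lemma part1 {ρ M ν σ : ℝ} {n : ℕ} (hρ : 0 < ρ) (hM : 0 < M) (hν : 1 ≤ ν) (hn : 2 ≤ n)
    (hσ : 1 < σ) (k : ℕ) (hk : 1 ≤ k) (m : ℕ) :
    |(k : ℝ) / (Nat.factorial (k + 1)) * iterX M ρ n k m| ≤
      M / σ ^ n *
        (Real.sqrt (ν * (n + 1) * M) / (σ ^ (((n : ℝ) - 2) / 2) * Real.log σ)) ^ (2 * k) /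
        Real.sqrt (k * Real.pi) * (σ * ρ) ^ (m - 1) := by
  have hσ0 : (0:ℝ) < σ := by linarith
  have hL : 0 < Real.log σ := Real.log_pos hσ
  have hπ := Real.pi_pos
  have hk' : (0:ℝ) < (k:ℝ) := by exact_mod_cast hk
  set L := Real.log σ with hLdef
  set R := σ ^ (((n : ℝ) - 2) / 2) with hRdef
  have hR : 0 < R := Real.rpow_pos_of_pos hσ0 _
  set Q := Real.sqrt (ν * (n + 1) * M) / (R * L) with hQdef
  set Q1 := Real.sqrt (((n:ℝ) + 1) * M) / (R * L) with hQ1def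
  have hQ1nn : 0 ≤ Q1 := by positivity
  have hQnn : 0 ≤ Q := by positivity
  have hQ1Q : Q1 ≤ Q := by
    rw [hQ1def, hQdef]
    have hνn : (0:ℝ) ≤ (ν - 1) * ((n:ℝ)+1) :=
      mul_nonneg (sub_nonneg.mpr hν) (by positivity)
    gcongr
    all_goals first
      | positivity
      | nlinarith [hνn]
  have hR2 : R ^ 2 = σ ^ (n - 2 : ℕ) := by
    rw [hRdef, ← Real.rpow_natCast (σ ^ (((n : ℝ) - 2) / 2)) 2, ← Real.rpow_mul hσ0.le]
    have e : ((n : ℝ) - 2) / 2 * ((2:ℕ):ℝ) = ((n - 2 : ℕ) : ℝ) := by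
      have : ((n - 2 : ℕ) : ℝ) = (n:ℝ) - 2 := by
        push_cast [hn]
        ring
      rw [this]
      push_cast
      ring
    rw [e, Real.rpow_natCast]
  have hQ1sq : Q1 ^ 2 = (((n:ℝ) + 1) * M) / (σ ^ (n - 2 : ℕ) * L ^ 2) := by
    rw [hQ1def, div_pow, mul_pow, hR2, Real.sq_sqrt (by positivity)]
  have hQ1pow : Q1 ^ (2 * k) = (((n:ℝ) + 1) * M) ^ k / (σ ^ ((n - 2) * k) * L ^ (2 * k)) := by
    rw [pow_mul, hQ1sq, div_pow, mul_pow (σ ^ (n - 2 : ℕ)) (L^2) k,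
      ← pow_mul σ (n-2) k, ← pow_mul L 2 k]
  have hck : 0 ≤ (k:ℝ) / (Nat.factorial (k + 1)) := by positivity
  have hRHS0 : 0 ≤ M / σ ^ n * Q ^ (2 * k) / Real.sqrt (k * Real.pi) * (σ * ρ) ^ (m - 1) := by
    positivity
  obtain ⟨hnn, hb⟩ := iterX_bound hρ hM hn k m
  rw [abs_of_nonneg (mul_nonneg hck hnn)]
  by_cases hm : (k+1)*n+1 ≤ m
  case neg =>
    refine le_trans ?_ hRHS0
    refine le_trans (mul_le_mul_of_nonneg_left hb hck) ?_
    simp only [coefF]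
    rw [if_neg hm, mul_zero]
  case pos =>
    set j := m - ((k+1)*n+1) with hj
    set P := (∏ i ∈ Finset.range k, ((i+1)*n+1) : ℕ) with hP
    have hcoef : coefF ((P:ℝ) * M^(k+1) * ρ^((k+1)*n)) ρ ((k+1)*n+1) (2*k+1) m
        = (P:ℝ) * M^(k+1) * ρ^((k+1)*n) * ((Nat.choose (j + 2*k) (2*k) : ℕ) : ℝ) * ρ^j := by
      simp only [coefF]
      rw [if_pos hm]
      have e : m - ((k+1)*n+1) + (2*k+1-1) = j + 2*k := by omega
      rw [e]
      have e2 : 2*k+1-1 = 2*k := by omega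
      rw [e2]
    rw [hcoef] at hb
    have hρpow : ρ^((k+1)*n) * ρ^j = ρ^(m-1) := by
      rw [← pow_add]
      congr 1
      omega
    have hPb : ((P:ℕ):ℝ) ≤ (Nat.factorial k : ℝ) * ((n:ℝ)+1)^k := by
      have := prod_bound n k
      rw [hP]
      calc ((P:ℕ):ℝ) ≤ ((Nat.factorial k * (n+1)^k : ℕ) : ℝ) := by exact_mod_cast this
        _ = (Nat.factorial k : ℝ) * ((n:ℝ)+1)^k := by push_cast; ring
    have hckP : (k:ℝ) / (Nat.factorial (k + 1)) * (P:ℝ) ≤ ((n:ℝ)+1)^k := by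
      calc (k:ℝ) / (Nat.factorial (k + 1)) * (P:ℝ)
          ≤ (k:ℝ) / (Nat.factorial (k + 1)) * ((Nat.factorial k : ℝ) * ((n:ℝ)+1)^k) :=
            mul_le_mul_of_nonneg_left hPb hck
        _ = ((k:ℝ) * (Nat.factorial k : ℝ) / (Nat.factorial (k + 1))) * ((n:ℝ)+1)^k := by
            ring
        _ ≤ 1 * ((n:ℝ)+1)^k := by
            apply mul_le_mul_of_nonneg_right _ (by positivity)
            rw [div_le_one (by positivity)]
            rw [Nat.factorial_succ]
            push_cast
            nlinarith [Nat.cast_nonneg (α := ℝ) (Nat.factorial k)]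
        _ = ((n:ℝ)+1)^k := one_mul _
    have hCb := choose_bound hσ k j hk
    have hσpow : σ^(m-1) = σ^n * σ^((n-2)*k) * σ^(j+2*k) := by
      rw [← pow_add, ← pow_add]
      congr 1
      have h1 : (k+1)*n = n*k + n := by ring
      have h2 : (n-2)*k = n*k - 2*k := Nat.sub_mul n 2 k
      have h3 : 2*k ≤ n*k := Nat.mul_le_mul_right k hn
      omega
    calc (k:ℝ) / (Nat.factorial (k + 1)) * iterX M ρ n k m
        ≤ (k:ℝ) / (Nat.factorial (k + 1)) *
            ((P:ℝ) * M^(k+1) * ρ^((k+1)*n) * ((Nat.choose (j + 2*k) (2*k) : ℕ) : ℝ) * ρ^j) :=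
          mul_le_mul_of_nonneg_left hb hck
      _ = ((k:ℝ) / (Nat.factorial (k + 1)) * (P:ℝ)) * M^(k+1) *
            ((Nat.choose (j + 2*k) (2*k) : ℕ) : ℝ) * (ρ^((k+1)*n) * ρ^j) := by ring
      _ ≤ ((n:ℝ)+1)^k * M^(k+1) * (σ ^ (j + 2*k) / (L^(2*k) * Real.sqrt (k * Real.pi))) *
            (ρ^((k+1)*n) * ρ^j) := by
          have hρnn : 0 ≤ ρ^((k+1)*n) * ρ^j := by positivity
          apply mul_le_mul_of_nonneg_right _ hρnn
          apply mul_le_mul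
          · apply mul_le_mul_of_nonneg_right hckP (by positivity)
          · exact hCb
          · positivity
          · positivity
      _ = M / σ ^ n * Q1 ^ (2 * k) / Real.sqrt (k * Real.pi) * (σ^(m-1) * ρ^(m-1)) := by
          rw [hρpow, hQ1pow, hσpow, mul_pow ((n:ℝ)+1) M k]
          have h1 : σ ^ n ≠ 0 := by positivity
          have h2 : σ ^ ((n-2)*k) ≠ 0 := by positivity
          have h3 : L ^ (2*k) ≠ 0 := by positivity
          have h4 : Real.sqrt (k * Real.pi) ≠ 0 := by positivity
          field_simp
          ring
      _ ≤ M / σ ^ n * Q ^ (2 * k) / Real.sqrt (k * Real.pi) * (σ * ρ) ^ (m - 1) := by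
          rw [mul_pow]
          gcongr

/-- In the Banach space `L_{σρ}` (norm: `‖V‖ = sup_m |V_m|/(σρ)^{m-1}`), each
term `(k/(k+1)!) X^{k+1}` of the series has norm at most
`(M/σ^n) q^{2k}/√(kπ)` where `q = √(ν(n+1)M)/(σ^{(n-2)/2} ln σ) < 1`, so the
series converges there with `‖∑_{k≥1} (k/(k+1)!) X^{k+1}‖ ≤
(M/(√π σ^n)) q²/(1-q²)`. -/
theorem stmt_18 (ρ M ν σ : ℝ) (n : ℕ) (hρ : 0 < ρ) (hM : 0 < M)
    (hν : 1 ≤ ν) (hn : 2 ≤ n) (hσ : 1 < σ)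
    (hq : Real.sqrt (ν * (n + 1) * M) / (σ ^ (((n : ℝ) - 2) / 2) * Real.log σ) < 1) :
    (∀ k : ℕ, 1 ≤ k → ∀ m : ℕ,
      |(k : ℝ) / (Nat.factorial (k + 1)) * iterX M ρ n k m| ≤
        M / σ ^ n *
          (Real.sqrt (ν * (n + 1) * M) / (σ ^ (((n : ℝ) - 2) / 2) * Real.log σ)) ^ (2 * k) /
          Real.sqrt (k * Real.pi) * (σ * ρ) ^ (m - 1)) ∧
    (∀ m : ℕ,
      Summable (fun k : ℕ =>
        ((k + 1 : ℕ) : ℝ) / (Nat.factorial (k + 2)) * iterX M ρ n (k + 1) m)) ∧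
    (∀ m : ℕ,
      |∑' k : ℕ, ((k + 1 : ℕ) : ℝ) / (Nat.factorial (k + 2)) * iterX M ρ n (k + 1) m| ≤
        M / (Real.sqrt Real.pi * σ ^ n) *
          (Real.sqrt (ν * (n + 1) * M) / (σ ^ (((n : ℝ) - 2) / 2) * Real.log σ)) ^ 2 /
          (1 - (Real.sqrt (ν * (n + 1) * M) / (σ ^ (((n : ℝ) - 2) / 2) * Real.log σ)) ^ 2) *
          (σ * ρ) ^ (m - 1)) := by
  have hσ0 : (0:ℝ) < σ := by linarith
  have hL : 0 < Real.log σ := Real.log_pos hσ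
  have hπ := Real.pi_pos
  have hR : 0 < σ ^ (((n : ℝ) - 2) / 2) := Real.rpow_pos_of_pos hσ0 _
  set Q := Real.sqrt (ν * (n + 1) * M) / (σ ^ (((n : ℝ) - 2) / 2) * Real.log σ) with hQdef
  have hQnn : 0 ≤ Q := by positivity
  have hQsq : Q ^ 2 < 1 := by nlinarith
  have hQsqnn : (0:ℝ) ≤ Q ^ 2 := sq_nonneg Q
  have key : ∀ m : ℕ,
      (Summable fun k : ℕ =>
        ((k + 1 : ℕ) : ℝ) / (Nat.factorial (k + 2)) * iterX M ρ n (k + 1) m) ∧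
      |∑' k : ℕ, ((k + 1 : ℕ) : ℝ) / (Nat.factorial (k + 2)) * iterX M ρ n (k + 1) m| ≤
        M / (Real.sqrt Real.pi * σ ^ n) * Q ^ 2 / (1 - Q ^ 2) * (σ * ρ) ^ (m - 1) := by
    intro m
    set C : ℝ := M / σ ^ n / Real.sqrt Real.pi * (σ * ρ) ^ (m - 1) with hC
    have hCnn : 0 ≤ C := by positivity
    set f : ℕ → ℝ := fun k : ℕ =>
      ((k + 1 : ℕ) : ℝ) / (Nat.factorial (k + 2)) * iterX M ρ n (k + 1) m with hfdef
    set g : ℕ → ℝ := fun k : ℕ => (C * Q ^ 2) * (Q ^ 2) ^ k with hgdef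
    have hgsum : Summable g := (summable_geometric_of_lt_one hQsqnn hQsq).mul_left _
    have hbound : ∀ k : ℕ, |f k| ≤ g k := by
      intro k
      have h1 := part1 hρ hM hν hn hσ (k + 1) (Nat.le_add_left 1 k) m
      calc |f k| = |((k + 1 : ℕ) : ℝ) / (Nat.factorial (k + 1 + 1)) * iterX M ρ n (k + 1) m| := rfl
        _ ≤ M / σ ^ n * Q ^ (2 * (k + 1)) / Real.sqrt ((k + 1 : ℕ) * Real.pi) *
              (σ * ρ) ^ (m - 1) := h1
        _ ≤ M / σ ^ n * Q ^ (2 * (k + 1)) / Real.sqrt Real.pi * (σ * ρ) ^ (m - 1) := by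
            gcongr
            nlinarith [hπ, (by exact_mod_cast Nat.succ_le_succ (Nat.zero_le k) :
              (1:ℝ) ≤ ((k+1:ℕ):ℝ))]
        _ = g k := by
            have e : Q ^ (2 * (k + 1)) = Q ^ 2 * (Q ^ 2) ^ k := by
              rw [pow_mul, pow_succ]
              ring
            rw [hgdef, hC, e]
            ring
    have hfsum : Summable f := Summable.of_norm_bounded hgsum (fun k => by
      rw [Real.norm_eq_abs]; exact hbound k)
    refine ⟨hfsum, ?_⟩
    have habs : Summable fun k => |f k| :=
      Summable.of_nonneg_of_le (fun k => abs_nonneg _) hbound hgsum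
    calc |∑' k, f k| ≤ ∑' k, |f k| := by
            simpa [Real.norm_eq_abs] using norm_tsum_le_tsum_norm (f := f)
              (by simpa [Real.norm_eq_abs] using habs)
        _ ≤ ∑' k, g k := Summable.tsum_le_tsum hbound habs hgsum
        _ = (C * Q ^ 2) * (1 - Q ^ 2)⁻¹ := by
            rw [hgdef, tsum_mul_left, tsum_geometric_of_lt_one hQsqnn hQsq]
        _ = M / (Real.sqrt Real.pi * σ ^ n) * Q ^ 2 / (1 - Q ^ 2) * (σ * ρ) ^ (m - 1) := by
            rw [hC]
            have h1 : Real.sqrt Real.pi ≠ 0 := by positivity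
            have h2 : σ ^ n ≠ 0 := by positivity
            field_simp
  exact ⟨fun k hk m => part1 hρ hM hν hn hσ k hk m, fun m => (key m).1, fun m => (key m).2⟩
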